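/- (Characterization of rectifying curves, Theorem 3.2.) Let γ : ℝ → ℝ³ be a differentiable curve and e₁, e₂, e₃ : ℝ → ℝ³ differentiable curves that are linearly independent at every s, with γ'(s) = e₁(s) for all s. Let k, k*, w, w* : ℝ → ℝ be continuous with k(s) > 0 for all s, satisfying the Frenet-type equations e₁' = k·e₂, e₂' = −k*·e₁ + w·e₃, e₃' = −w*·e₂. Then there exists a fixed point p₀ ∈ ℝ³ such that p₀ − γ(s) lies in the linear span of {e₁(s), e₃(s)} for every s if and only if there exist constants c ∈ ℝ and β ≠ 0 such that w*(s)/k(s) = (c − s)/β for all s (equivalently, (w*/k)' is a nonzero constant). -/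

import Mathlib

/-- 3×3 determinant of three vectors, written explicitly. -/
def det3 (u v w : Fin 3 → ℝ) : ℝ :=
  u 0 * (v 1 * w 2 - v 2 * w 1) - u 1 * (v 0 * w 2 - v 2 * w 0)
    + u 2 * (v 0 * w 1 - v 1 * w 0)

lemma det3_eq (u v w : Fin 3 → ℝ) : (Matrix.of ![u, v, w]).det = det3 u v w := by
  simp [Matrix.det_fin_three, det3]; ring

/-- Theorem 3.2, rectifying curves: A curve `γ` with Frenet-type
frame `(e₁, e₂, e₃)`, `γ' = e₁`, coefficients `(k, k*, w, w*)`, `k > 0`, is a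
rectifying curve (there is a fixed point `p₀` with `p₀ − γ(s)` in every
rectifying plane `span{e₁(s), e₃(s)}`) iff there are constants `c` and
`β ≠ 0` with `w*/k = (c − s)/β`, i.e. `(w*/k)'` is a nonzero constant. -/
theorem stmt_8 (γ e₁ e₂ e₃ : ℝ → (Fin 3 → ℝ)) (k kstar w wstar : ℝ → ℝ)
    (hdγ : Differentiable ℝ γ)
    (hd₁ : Differentiable ℝ e₁) (hd₂ : Differentiable ℝ e₂)
    (hd₃ : Differentiable ℝ e₃)
    (hli : ∀ s, LinearIndependent ℝ ![e₁ s, e₂ s, e₃ s])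
    (hγ' : ∀ s, deriv γ s = e₁ s)
    (hk : Continuous k) (hkstar : Continuous kstar)
    (hw : Continuous w) (hwstar : Continuous wstar)
    (hkpos : ∀ s, 0 < k s)
    (hF₁ : ∀ s, deriv e₁ s = k s • e₂ s)
    (hF₂ : ∀ s, deriv e₂ s = -kstar s • e₁ s + w s • e₃ s)
    (hF₃ : ∀ s, deriv e₃ s = -wstar s • e₂ s) :
    (∃ p₀ : Fin 3 → ℝ,
      ∀ s, p₀ - γ s ∈ Submodule.span ℝ {e₁ s, e₃ s}) ↔
    (∃ c β : ℝ, β ≠ 0 ∧ ∀ s, wstar s / k s = (c - s) / β) := by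
  have hkne : ∀ s, k s ≠ 0 := fun s => (hkpos s).ne'
  constructor
  · rintro ⟨p₀, hp⟩
    set v : ℝ → (Fin 3 → ℝ) := fun s => p₀ - γ s with hv
    have hdv : Differentiable ℝ v := (differentiable_const p₀).sub hdγ
    have hv' : ∀ s, deriv v s = -e₁ s := by
      intro s
      have : deriv v s = -deriv γ s := by
        rw [hv]; exact deriv_const_sub _
      rw [this, hγ' s]
    -- determinant function
    set D : ℝ → ℝ := fun s => det3 (e₁ s) (e₂ s) (e₃ s) with hD
    have hDne : ∀ s, D s ≠ 0 := by
      intro s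
      have hu : IsUnit (Matrix.of ![e₁ s, e₂ s, e₃ s]) :=
        Matrix.linearIndependent_rows_iff_isUnit.1 (hli s)
      have := ((Matrix.isUnit_iff_isUnit_det _).1 hu).ne_zero
      rwa [det3_eq] at this
    -- component differentiability
    have hcomp : ∀ (f : ℝ → (Fin 3 → ℝ)), Differentiable ℝ f →
        ∀ i, Differentiable ℝ (fun s => f s i) := by
      intro f hf i
      exact (differentiable_pi.1 hf) i
    -- the coefficient functions via Cramer's rule
    set a : ℝ → ℝ := fun s => det3 (v s) (e₂ s) (e₃ s) / D s with ha
    set b : ℝ → ℝ := fun s => det3 (e₁ s) (e₂ s) (v s) / D s with hb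
    -- pointwise representation
    have hrep : ∀ s, v s = a s • e₁ s + b s • e₃ s := by
      intro s
      obtain ⟨a₀, b₀, hab⟩ := Submodule.mem_span_pair.1 (hp s)
      have hvs : v s = a₀ • e₁ s + b₀ • e₃ s := hab.symm
      have hnum1 : det3 (v s) (e₂ s) (e₃ s) = a₀ * D s := by
        rw [hvs]; simp only [det3, hD, Pi.add_apply, Pi.smul_apply, smul_eq_mul]; ring
      have hnum2 : det3 (e₁ s) (e₂ s) (v s) = b₀ * D s := by
        rw [hvs]; simp only [det3, hD, Pi.add_apply, Pi.smul_apply, smul_eq_mul]; ring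
      have ha' : a s = a₀ := by rw [ha]; field_simp [hnum1, hDne s]; rw [hnum1]; ring
      have hb' : b s = b₀ := by rw [hb]; field_simp [hnum2, hDne s]; rw [hnum2]; ring
      rw [ha', hb', hvs]
    -- differentiability of a and b
    have hdet3diff : ∀ (f g h : ℝ → (Fin 3 → ℝ)), Differentiable ℝ f →
        Differentiable ℝ g → Differentiable ℝ h →
        Differentiable ℝ (fun s => det3 (f s) (g s) (h s)) := by
      intro f g h hf hg hh
      have := hcomp f hf; have := hcomp g hg; have := hcomp h hh
      unfold det3
      fun_prop
    have hDd : Differentiable ℝ D := hdet3diff _ _ _ hd₁ hd₂ hd₃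
    have hda : Differentiable ℝ a :=
      (hdet3diff _ _ _ hdv hd₂ hd₃).div hDd hDne
    have hdb : Differentiable ℝ b :=
      (hdet3diff _ _ _ hd₁ hd₂ hdv).div hDd hDne
    -- differentiate the representation
    have hkey : ∀ s, (deriv a s + 1) • e₁ s + (a s * k s - b s * wstar s) • e₂ s
        + (deriv b s) • e₃ s = 0 := by
      intro s
      have hvfun : v = fun t => a t • e₁ t + b t • e₃ t := funext hrep
      have hdv' : deriv v s = (a s • deriv e₁ s + deriv a s • e₁ s)
          + (b s • deriv e₃ s + deriv b s • e₃ s) := by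
        rw [hvfun]
        rw [deriv_fun_add (f := fun t => a t • e₁ t) (g := fun t => b t • e₃ t) ((hda s).smul (hd₁ s)) ((hdb s).smul (hd₃ s)),
          deriv_fun_smul (hda s) (hd₁ s), deriv_fun_smul (hdb s) (hd₃ s)]
      rw [hv' s, hF₁ s, hF₃ s] at hdv'
      have := hdv'
      rw [smul_smul, smul_smul] at this
      -- -e₁ s = (a*k)•e₂ + a'•e₁ + (b*(-w*))•e₂ + b'•e₃
      have h0 : (deriv a s + 1) • e₁ s + (a s * k s - b s * wstar s) • e₂ s
          + (deriv b s) • e₃ s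
          = (a s * k s) • e₂ s + deriv a s • e₁ s
            + ((b s * -wstar s) • e₂ s + deriv b s • e₃ s) + e₁ s := by
        simp only [add_smul, sub_smul, mul_neg, neg_smul, one_smul]
        abel
      rw [h0, ← this]
      abel
    have hcoef : ∀ s, deriv a s = -1 ∧ a s * k s = b s * wstar s ∧ deriv b s = 0 := by
      intro s
      have := Fintype.linearIndependent_iff.1 (hli s)
        ![deriv a s + 1, a s * k s - b s * wstar s, deriv b s]
        (by
          have := hkey s
          simpa [Fin.sum_univ_three] using this)
      have h0 := this 0
      have h1 := this 1
      have h2 := this 2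
      simp only [Matrix.cons_val_zero, Matrix.cons_val_one, Matrix.head_cons,
        Matrix.cons_val_two, Matrix.tail_cons] at h0 h1 h2
      exact ⟨by linarith, by linarith, h2⟩
    -- b is constant
    have hbconst : ∀ s, b s = b 0 :=
      fun s => is_const_of_deriv_eq_zero hdb (fun t => (hcoef t).2.2) s 0
    -- a s = a 0 - s
    have haval : ∀ s, a s = a 0 - s := by
      intro s
      have hg : Differentiable ℝ (fun t => a t + t) := hda.add differentiable_id
      have hg' : ∀ t, deriv (fun t => a t + t) t = 0 := by
        intro t
        rw [deriv_fun_add (hda t) differentiableAt_fun_id]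
        simp [(hcoef t).1]
      have := is_const_of_deriv_eq_zero hg hg' s 0
      simp at this
      linarith
    -- β ≠ 0
    have hβne : b 0 ≠ 0 := by
      intro hβ
      have hazero : ∀ s, a s = 0 := by
        intro s
        have h2 := (hcoef s).2.1
        rw [hbconst s, hβ] at h2
        simpa [hkne s] using h2
      have : deriv a 0 = 0 := by
        have : a = fun _ => 0 := funext hazero
        rw [this]; simp
      rw [(hcoef 0).1] at this
      norm_num at this
    refine ⟨a 0, b 0, hβne, fun s => ?_⟩
    have h2 := (hcoef s).2.1
    rw [hbconst s, haval s] at h2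
    rw [div_eq_div_iff (hkne s) hβne]
    linarith [h2]
  · rintro ⟨c, β, hβ, hr⟩
    have hws : ∀ s, β * wstar s = (c - s) * k s := by
      intro s
      have := hr s
      field_simp [hkne s, hβ] at this
      linarith [this]
    set f : ℝ → (Fin 3 → ℝ) := fun s => γ s + (c - s) • e₁ s + β • e₃ s with hf
    have hC : Differentiable ℝ (fun t : ℝ => c - t) := by fun_prop
    have hA : Differentiable ℝ (fun t => (c - t) • e₁ t) := hC.smul hd₁
    have hB : Differentiable ℝ (fun t => β • e₃ t) := hd₃.const_smul β
    have hdf : Differentiable ℝ f := (hdγ.add hA).add hB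
    have hf' : ∀ s, deriv f s = 0 := by
      intro s
      rw [hf]
      rw [deriv_fun_add (f := fun t => γ t + (c - t) • e₁ t) (g := fun t => β • e₃ t) ((hdγ s).add (hA s)) (hB s),
        deriv_fun_add (f := γ) (g := fun t => (c - t) • e₁ t) (hdγ s) (hA s),
        deriv_fun_smul (hC s) (hd₁ s),
        deriv_fun_const_smul β (hd₃ s)]
      have hd1 : deriv (fun t : ℝ => c - t) s = -1 := by
        rw [deriv_const_sub]; simp
      rw [hd1, hγ' s, hF₁ s, hF₃ s]
      simp only [smul_smul, neg_one_smul, mul_neg, neg_smul]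
      rw [show (c - s) * k s = β * wstar s from (hws s).symm]
      module
    have hconst : ∀ s, f s = f 0 := fun s => is_const_of_deriv_eq_zero hdf hf' s 0
    refine ⟨f 0, fun s => ?_⟩
    have : f 0 - γ s = (c - s) • e₁ s + β • e₃ s := by
      rw [← hconst s, hf]
      simp only []
      abel
    rw [this]
    exact Submodule.mem_span_pair.2 ⟨c - s, β, rfl⟩
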